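/- Let X be a Banach space with r_X(1) > 0. If c satisfies 1 > c > 1/(r_X(1) + 1), then r_X(c) > 0. -/

import Mathlib

open Filter Topology Metric NormedSpace ZeroAtInfty

/-- Opial's modulus of a Banach space `X` at `c`. -/
noncomputable def opialModulus (X : Type*) [NormedAddCommGroup X] [NormedSpace ℝ X] (c : ℝ) : ℝ :=
  sInf { r : ℝ | ∃ (x : X) (xs : ℕ → X), c ≤ ‖x‖ ∧
    (∀ f : X →L[ℝ] ℝ, Tendsto (fun n => f (xs n)) atTop (𝓝 0)) ∧
    1 ≤ liminf (fun n => ‖xs n‖) atTop ∧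
    r = liminf (fun n => ‖xs n - x‖) atTop - 1 }

/-- If the liminf of a real sequence is at least 1, the sequence is frequently bounded above. -/
private lemma freq_le_of_one_le_liminf {f : ℕ → ℝ}
    (h : (1 : ℝ) ≤ liminf (fun n => f n) atTop) :
    ∃ b, ∃ᶠ n in atTop, f n ≤ b := by
  by_contra hb
  push_neg at hb
  have huniv : {a : ℝ | ∀ᶠ n in atTop, a ≤ f n} = Set.univ := by
    ext a
    simp only [Set.mem_setOf_eq, Set.mem_univ, iff_true]
    have := hb a
    exact this.mono fun n hn => le_of_lt hn
  have : liminf (fun n => f n) atTop = 0 := by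
    rw [Filter.liminf_eq, huniv, Real.sSup_univ]
  linarith

private lemma cobdd_norm_sub {X : Type*} [NormedAddCommGroup X] {xs : ℕ → X} {b : ℝ}
    (hb : ∃ᶠ n in atTop, ‖xs n‖ ≤ b) (y : X) :
    IsCoboundedUnder (· ≥ ·) atTop (fun n => ‖xs n - y‖) :=
  IsCoboundedUnder.of_frequently_le (a := b + ‖y‖) <| hb.mono fun n hn => by
    calc ‖xs n - y‖ ≤ ‖xs n‖ + ‖y‖ := norm_sub_le _ _
    _ ≤ b + ‖y‖ := by linarith

private lemma bdd_norm_sub {X : Type*} [NormedAddCommGroup X] (xs : ℕ → X) (y : X) :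
    IsBoundedUnder (· ≥ ·) atTop (fun n => ‖xs n - y‖) :=
  isBoundedUnder_of ⟨0, fun n => norm_nonneg _⟩

theorem stmt1 (X : Type*) [NormedAddCommGroup X] [NormedSpace ℝ X] [CompleteSpace X]
    (hr : 0 < opialModulus X 1) (c : ℝ) (hc1 : c < 1)
    (hc2 : 1 / (opialModulus X 1 + 1) < c) :
    0 < opialModulus X c := by
  set r₁ := opialModulus X 1 with hr₁def
  set S₁ := { r : ℝ | ∃ (x : X) (xs : ℕ → X), (1:ℝ) ≤ ‖x‖ ∧
    (∀ f : X →L[ℝ] ℝ, Tendsto (fun n => f (xs n)) atTop (𝓝 0)) ∧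
    1 ≤ liminf (fun n => ‖xs n‖) atTop ∧
    r = liminf (fun n => ‖xs n - x‖) atTop - 1 } with hS₁def
  have hr₁S : r₁ = sInf S₁ := rfl
  -- basic numeric facts
  have hc0 : 0 < c := lt_trans (by positivity) hc2
  have hbound : 0 < r₁ + c - 1 := by
    have h1 : 0 < r₁ + 1 := by linarith
    have h2 : 1 < c * (r₁ + 1) := by
      rw [div_lt_iff₀ h1] at hc2; linarith
    nlinarith
  -- S₁ is bounded below by -1
  have hS₁bdd : BddBelow S₁ := by
    refine ⟨-1, fun r hrmem => ?_⟩
    obtain ⟨x, xs, hx, hw, hl, heq⟩ := hrmem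
    obtain ⟨b, hb⟩ := freq_le_of_one_le_liminf hl
    have h0 : (0:ℝ) ≤ liminf (fun n => ‖xs n - x‖) atTop :=
      le_liminf_of_le (cobdd_norm_sub hb x) (Eventually.of_forall fun n => norm_nonneg _)
    rw [heq]; linarith
  -- S₁ is nonempty
  have hS₁ne : S₁.Nonempty := by
    by_contra hne
    rw [Set.not_nonempty_iff_eq_empty] at hne
    rw [hr₁S, hne, Real.sInf_empty] at hr
    exact lt_irrefl 0 hr
  -- the set defining opialModulus X c
  have key : ∀ r ∈ { r : ℝ | ∃ (x : X) (xs : ℕ → X), c ≤ ‖x‖ ∧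
      (∀ f : X →L[ℝ] ℝ, Tendsto (fun n => f (xs n)) atTop (𝓝 0)) ∧
      1 ≤ liminf (fun n => ‖xs n‖) atTop ∧
      r = liminf (fun n => ‖xs n - x‖) atTop - 1 }, r₁ + c - 1 ≤ r := by
    rintro r ⟨x, xs, hx, hw, hl, heq⟩
    obtain ⟨b, hb⟩ := freq_le_of_one_le_liminf hl
    by_cases h1 : 1 ≤ ‖x‖
    · -- then r ∈ S₁
      have hmem : r ∈ S₁ := ⟨x, xs, h1, hw, hl, heq⟩
      have : r₁ ≤ r := hr₁S ▸ csInf_le hS₁bdd hmem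
      linarith
    · push_neg at h1
      have hxpos : 0 < ‖x‖ := lt_of_lt_of_le hc0 hx
      set x' := ‖x‖⁻¹ • x with hx'def
      have hx'norm : ‖x'‖ = 1 := by
        rw [hx'def, norm_smul, norm_inv, norm_norm, inv_mul_cancel₀ (ne_of_gt hxpos)]
      -- distance between x and x'
      have hd : ‖x - x'‖ = 1 - ‖x‖ := by
        have hxx : x - x' = (1 - ‖x‖⁻¹) • x := by
          rw [sub_smul, one_smul, hx'def]
        rw [hxx, norm_smul, Real.norm_eq_abs, abs_of_nonpos (by
          have : (1:ℝ) ≤ ‖x‖⁻¹ := by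
            rw [le_inv_comm₀ (by norm_num) hxpos]; simpa using h1.le
          linarith)]
        field_simp
        ring
      set d := 1 - ‖x‖ with hddef
      have hd' : d ≤ 1 - c := by simp only [hddef]; linarith
      set L := liminf (fun n => ‖xs n - x‖) atTop with hLdef
      set L' := liminf (fun n => ‖xs n - x'‖) atTop with hL'def
      -- x' gives an element of S₁
      have hmem : L' - 1 ∈ S₁ := ⟨x', xs, hx'norm.ge, hw, hl, rfl⟩
      have hr₁le : r₁ ≤ L' - 1 := hr₁S ▸ csInf_le hS₁bdd hmem
      -- L' ≤ L + d
      have hLL' : L' ≤ L + d := by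
        have hpt : ∀ n, ‖xs n - x'‖ ≤ ‖xs n - x‖ + d := by
          intro n
          calc ‖xs n - x'‖ ≤ ‖xs n - x‖ + ‖x - x'‖ := by
                have := norm_sub_le_norm_sub_add_norm_sub (xs n) x x'
                exact this
          _ = ‖xs n - x‖ + d := by rw [hd]
        have hcob : IsCoboundedUnder (· ≥ ·) atTop (fun n => ‖xs n - x‖ + d) := by
          refine IsCoboundedUnder.of_frequently_le (a := b + ‖x‖ + d) ?_
          refine hb.mono fun n hn => ?_
          have := norm_sub_le (xs n) x
          linarith
        have h2 : liminf (fun n => ‖xs n - x‖ + d) atTop = L + d :=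
          liminf_add_const atTop (fun n => ‖xs n - x‖) d
            (cobdd_norm_sub hb x) (bdd_norm_sub xs x)
        calc L' ≤ liminf (fun n => ‖xs n - x‖ + d) atTop :=
              liminf_le_liminf (Eventually.of_forall hpt) (bdd_norm_sub xs x') hcob
        _ = L + d := h2
      -- conclude
      rw [heq]
      linarith
  -- finish
  obtain ⟨r₀, hr₀⟩ := hS₁ne
  obtain ⟨x₀, xs₀, hx₀, hw₀, hl₀, heq₀⟩ := hr₀
  have hne : { r : ℝ | ∃ (x : X) (xs : ℕ → X), c ≤ ‖x‖ ∧
      (∀ f : X →L[ℝ] ℝ, Tendsto (fun n => f (xs n)) atTop (𝓝 0)) ∧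
      1 ≤ liminf (fun n => ‖xs n‖) atTop ∧
      r = liminf (fun n => ‖xs n - x‖) atTop - 1 }.Nonempty :=
    ⟨r₀, x₀, xs₀, le_trans hc1.le hx₀, hw₀, hl₀, heq₀⟩
  have : r₁ + c - 1 ≤ opialModulus X c := le_csInf hne key
  linarith
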